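/- arXiv:0709.2559 — 3 statements merged into one kernel-verified Lean document; each statement's English description precedes it below -/
import Mathlib

section
/- The six-hump camel back function g(x1,x2) = 4x1^2 + x1*x2 - 4x2^2 - 2.1x1^4 + 4x2^4 + x1^6/3 attains its global minimum over R^2 at exactly two points, which are of the form (a,-b) and (-a,b) with a ≈ 0.0898, b ≈ 0.7127; in particular, if (x1,x2) is a global minimizer then so is (-x1,-x2). -/
/-- The six-hump camel back function. -/
noncomputable def sixHump (x1 x2 : ℝ) : ℝ :=
  4*x1^2 + x1*x2 - 4*x2^2 - 2.1*x1^4 + 4*x2^4 + x1^6/3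

notation "A₀" => (898420131/10^10 : ℝ)
notation "B₀" => (712656403/10^9 : ℝ)
notation "C₁" => (912981098356413131695053906857703589651/50000000000000000000000000000000000000000000000000 : ℝ)
notation "C₂" => (21209986465637173/62500000000000000000000000 : ℝ)

lemma sixHump_neg (x y : ℝ) : sixHump (-x) (-y) = sixHump x y := by
  unfold sixHump; ring

lemma sixHump_lower (x y : ℝ) : x^2 + y^2 - 5 ≤ sixHump x y := by
  unfold sixHump
  nlinarith [sq_nonneg (x+y), sq_nonneg (2*y^2 - 11/8), sq_nonneg (x*(x^2 - 3.5)), sq_nonneg x,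
    sq_nonneg (x^2 - 3.5)]

lemma sixHump_exists_min : ∃ p : ℝ × ℝ, ∀ q : ℝ × ℝ, sixHump p.1 p.2 ≤ sixHump q.1 q.2 := by
  have hc : Continuous fun p : ℝ × ℝ => sixHump p.1 p.2 := by
    unfold sixHump; continuity
  apply hc.exists_forall_le
  have h0 : Filter.Tendsto (fun p : ℝ × ℝ => ‖p‖^2 - 5) (Filter.cocompact (ℝ × ℝ)) Filter.atTop := by
    apply Filter.tendsto_atTop_add_const_right
    have := (Filter.Tendsto.atTop_mul_atTop₀ (tendsto_norm_cocompact_atTop (E := ℝ × ℝ))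
      (tendsto_norm_cocompact_atTop (E := ℝ × ℝ)))
    simpa [sq] using this
  apply Filter.tendsto_atTop_mono _ h0
  intro p
  have h2 : ‖p.1‖^2 = p.1^2 := by rw [Real.norm_eq_abs, sq_abs]
  have h3 : ‖p.2‖^2 = p.2^2 := by rw [Real.norm_eq_abs, sq_abs]
  have h1 : ‖p‖^2 ≤ p.1^2 + p.2^2 := by
    have e : ‖p‖ = max ‖p.1‖ ‖p.2‖ := rfl
    rcases max_cases ‖p.1‖ ‖p.2‖ with ⟨h, _⟩ | ⟨h, _⟩ <;> rw [e, h] <;>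
      nlinarith [sq_nonneg p.1, sq_nonneg p.2]
  have := sixHump_lower p.1 p.2
  linarith

lemma val_a0b0 : sixHump A₀ (-B₀) ≤ -1.0316284 := by
  unfold sixHump; norm_num

lemma region (x y : ℝ) (h : sixHump x y ≤ -1.0316284) :
    (0.03 ≤ x ∧ x ≤ 0.274 ∧ -0.91 ≤ y ∧ y ≤ -0.549) ∨
    (-0.274 ≤ x ∧ x ≤ -0.03 ∧ 0.549 ≤ y ∧ y ≤ 0.91) := by
  have hx : x^2 ≤ 0.075 := by
    unfold sixHump at h
    by_contra hc
    push_neg at hc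
    nlinarith [sq_nonneg (x+y), sq_nonneg (2*y^2 - 9/8), sq_nonneg (x^2 - 3.1125),
      mul_nonneg (le_of_lt (by linarith : (0:ℝ) < x^2 - 0.075)) (sq_nonneg (x^2 - 3.1125)), sq_nonneg x]
  have hy1 : 0.3019 ≤ y^2 := by
    unfold sixHump at h; nlinarith [sq_nonneg (x+y), sq_nonneg x, sq_nonneg (x^2 - 1)]
  have hy2 : y^2 ≤ 0.8231 := by
    unfold sixHump at h; nlinarith [sq_nonneg (x+y), sq_nonneg x, sq_nonneg (x^2 - 1)]
  have hxy : x*y ≤ -0.0316 := by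
    unfold sixHump at h
    nlinarith [sq_nonneg (2*y^2-1), sq_nonneg x, sq_nonneg (x^2-1), sq_nonneg (x*(x^2-1))]
  rcases lt_trichotomy y 0 with hy | hy | hy
  · left
    have hyl : -0.91 ≤ y := by nlinarith
    have hyu : y ≤ -0.549 := by nlinarith
    have hxl : 0.03 ≤ x := by nlinarith
    have hxu : x ≤ 0.274 := by nlinarith
    exact ⟨hxl, hxu, hyl, hyu⟩
  · exfalso; rw [hy] at hxy; norm_num at hxy
  · right
    have hyl : 0.549 ≤ y := by nlinarith
    have hyu : y ≤ 0.91 := by nlinarith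
    have hxl : -0.274 ≤ x := by nlinarith
    have hxu : x ≤ -0.03 := by nlinarith
    exact ⟨hxl, hxu, hyl, hyu⟩

lemma convAux (X Y u v : ℝ) (hX1 : 0.03 ≤ X) (hX2 : X ≤ 0.274)
    (hY1 : -0.91 ≤ Y) (hY2 : Y ≤ -0.549)
    (hu1 : -0.244 ≤ u) (hu2 : u ≤ 0.244) (hv1 : -0.361 ≤ v) (hv2 : v ≤ 0.361)
    (hne : 0 < u^2 + v^2) :
    0 < u^2*(1 - 3.15*X^2 + 1.25*X^4) + u^4*((5/16)*X^2 - 0.13125) + u^6/192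
      + u*v/4 + v^2*(6*Y^2-1) + v^4/4 := by
  nlinarith [sq_nonneg (u+v), sq_nonneg (u-v),
    mul_nonneg (mul_nonneg (by linarith : (0:ℝ) ≤ 0.274 - X) (by linarith : (0:ℝ) ≤ X - 0.03)) (sq_nonneg u),
    mul_nonneg (mul_nonneg (by linarith : (0:ℝ) ≤ 0.244 - u) (by linarith : (0:ℝ) ≤ u + 0.244)) (sq_nonneg u),
    mul_nonneg (by nlinarith : (0:ℝ) ≤ (Y + 0.549) * (Y - 0.549)) (sq_nonneg v),
    sq_nonneg (u*u), sq_nonneg (v*v), sq_nonneg (u*u*u), mul_nonneg (sq_nonneg u) (sq_nonneg X),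
    mul_nonneg (mul_nonneg (sq_nonneg u) (sq_nonneg X)) (sq_nonneg X)]

lemma conv (x1 y1 x2 y2 : ℝ)
    (hx1 : 0.03 ≤ x1) (hx1' : x1 ≤ 0.274) (hy1 : -0.91 ≤ y1) (hy1' : y1 ≤ -0.549)
    (hx2 : 0.03 ≤ x2) (hx2' : x2 ≤ 0.274) (hy2 : -0.91 ≤ y2) (hy2' : y2 ≤ -0.549)
    (hne : 0 < (x1-x2)^2 + (y1-y2)^2) :
    sixHump ((x1+x2)/2) ((y1+y2)/2) < (sixHump x1 y1 + sixHump x2 y2)/2 := by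
  have key := convAux ((x1+x2)/2) ((y1+y2)/2) (x1-x2) (y1-y2)
    (by linarith) (by linarith) (by linarith) (by linarith)
    (by linarith) (by linarith) (by linarith) (by linarith) hne
  unfold sixHump
  nlinarith [key]

lemma r1_bound (x : ℝ) (h1 : 0.03 ≤ x) (h2 : x ≤ 0.274) :
    2.5*(x - A₀)^2 ≤ (4*x^2 - 2.1*x^4 + x^6/3) - (4*A₀^2 - 2.1*A₀^4 + A₀^6/3)
      - (8*A₀ - 8.4*A₀^3 + 2*A₀^5)*(x - A₀) := by
  nlinarith [sq_nonneg (x - A₀),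
    mul_nonneg (mul_nonneg (by linarith : (0:ℝ) ≤ 0.274 - x) (by linarith : (0:ℝ) ≤ x - 0.03)) (sq_nonneg (x - A₀)),
    mul_nonneg (mul_nonneg (by linarith : (0:ℝ) ≤ 0.274 - x) (by linarith : (0:ℝ) ≤ x - 0.03)) (mul_nonneg (mul_nonneg (by linarith : (0:ℝ) ≤ 0.274 - x) (by linarith : (0:ℝ) ≤ x - 0.03)) (sq_nonneg (x - A₀))),
    sq_nonneg ((x - A₀)^2), sq_nonneg ((x - A₀)*(x-A₀)*(x-A₀))]

lemma r2_bound (y : ℝ) (h1 : -0.91 ≤ y) (h2 : y ≤ -0.549) :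
    2.9*(y + B₀)^2 ≤ (4*y^4 - 4*y^2) - (4*B₀^4 - 4*B₀^2) - (8*B₀ - 16*B₀^3)*(y + B₀) := by
  nlinarith [sq_nonneg (y + B₀),
    mul_nonneg (mul_nonneg (by linarith : (0:ℝ) ≤ -0.549 - y) (by linarith : (0:ℝ) ≤ y + 0.91)) (sq_nonneg (y + B₀)),
    sq_nonneg ((y + B₀)^2)]

lemma taylor_key (x y : ℝ) (hx1 : 0.03 ≤ x) (hx2 : x ≤ 0.274) (hy1 : -0.91 ≤ y) (hy2 : y ≤ -0.549) :
    sixHump A₀ (-B₀) + C₁*(x - A₀) + C₂*(y + B₀) + 2*((x - A₀)^2 + (y + B₀)^2)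
      ≤ sixHump x y := by
  have h1 := r1_bound x hx1 hx2
  have h2 := r2_bound y hy1 hy2
  have h3 : 0 ≤ 0.5*(x - A₀ + (y + B₀))^2 := by positivity
  unfold sixHump
  nlinarith [h1, h2, h3, sq_nonneg (y + B₀)]

lemma tight (x y : ℝ) (hx1 : 0.03 ≤ x) (hx2 : x ≤ 0.274) (hy1 : -0.91 ≤ y) (hy2 : y ≤ -0.549)
    (h : sixHump x y ≤ sixHump A₀ (-B₀)) :
    (x - A₀)^2 + (y + B₀)^2 ≤ 10^(-10 : ℤ) := by
  have key := taylor_key x y hx1 hx2 hy1 hy2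
  nlinarith [sq_nonneg (x - A₀ + C₁/2), sq_nonneg (y + B₀ + C₂/2)]

lemma min_in_posregion {p : ℝ × ℝ} (hp : ∀ q : ℝ × ℝ, sixHump p.1 p.2 ≤ sixHump q.1 q.2)
    (hr : 0.03 ≤ p.1 ∧ p.1 ≤ 0.274 ∧ -0.91 ≤ p.2 ∧ p.2 ≤ -0.549) :
    ∀ q : ℝ × ℝ, (∀ r : ℝ × ℝ, sixHump q.1 q.2 ≤ sixHump r.1 r.2) →
      (0.03 ≤ q.1 ∧ q.1 ≤ 0.274 ∧ -0.91 ≤ q.2 ∧ q.2 ≤ -0.549) → q = p := by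
  rintro q hq ⟨hq1, hq2, hq3, hq4⟩
  obtain ⟨hp1, hp2, hp3, hp4⟩ := hr
  by_contra hne
  have hne2 : 0 < (q.1 - p.1)^2 + (q.2 - p.2)^2 := by
    rcases Prod.ext_iff.not.mp hne with h
    by_contra hz
    push_neg at hz
    have e1 : q.1 = p.1 := by nlinarith [sq_nonneg (q.1 - p.1), sq_nonneg (q.2 - p.2)]
    have e2 : q.2 = p.2 := by nlinarith [sq_nonneg (q.1 - p.1), sq_nonneg (q.2 - p.2)]
    exact h ⟨e1, e2⟩
  have hmid := conv q.1 q.2 p.1 p.2 hq1 hq2 hq3 hq4 hp1 hp2 hp3 hp4 hne2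
  have h1 : sixHump p.1 p.2 ≤ sixHump ((q.1+p.1)/2) ((q.2+p.2)/2) := hp ((q.1+p.1)/2, (q.2+p.2)/2)
  have h2 : sixHump q.1 q.2 ≤ sixHump p.1 p.2 := hq p
  have h3 : sixHump p.1 p.2 ≤ sixHump q.1 q.2 := hp q
  linarith

theorem sixHump_two_global_minimizers :
    ∃ a b : ℝ, |a - 0.0898| ≤ 0.001 ∧ |b - 0.7127| ≤ 0.001 ∧
      {p : ℝ × ℝ | ∀ q : ℝ × ℝ, sixHump p.1 p.2 ≤ sixHump q.1 q.2}
        = {(a, -b), (-a, b)} ∧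
      ∀ p : ℝ × ℝ, (∀ q : ℝ × ℝ, sixHump p.1 p.2 ≤ sixHump q.1 q.2) →
        (∀ q : ℝ × ℝ, sixHump (-p.1) (-p.2) ≤ sixHump q.1 q.2) := by
  obtain ⟨p₀, hp₀⟩ := sixHump_exists_min
  -- normalize to positive-x region
  have hU₀ : sixHump p₀.1 p₀.2 ≤ -1.0316284 := le_trans (hp₀ (A₀, -B₀)) val_a0b0
  obtain ⟨p, hp, hr⟩ : ∃ p : ℝ × ℝ, (∀ q : ℝ × ℝ, sixHump p.1 p.2 ≤ sixHump q.1 q.2) ∧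
      (0.03 ≤ p.1 ∧ p.1 ≤ 0.274 ∧ -0.91 ≤ p.2 ∧ p.2 ≤ -0.549) := by
    rcases region p₀.1 p₀.2 hU₀ with h | h
    · exact ⟨p₀, hp₀, h⟩
    · refine ⟨(-p₀.1, -p₀.2), ?_, ⟨by simp; linarith [h.2.1], by simp; linarith [h.1],
        by simp; linarith [h.2.2.2], by simp; linarith [h.2.2.1]⟩⟩
      intro q
      simpa [sixHump_neg] using hp₀ q
  have htight := tight p.1 p.2 hr.1 hr.2.1 hr.2.2.1 hr.2.2.2 (hp (A₀, -B₀))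
  refine ⟨p.1, -p.2, ?_, ?_, ?_, ?_⟩
  · rw [abs_le]
    constructor <;> nlinarith [sq_nonneg (p.2 + B₀), sq_nonneg (p.1 - A₀)]
  · rw [abs_le]
    constructor <;> nlinarith [sq_nonneg (p.2 + B₀), sq_nonneg (p.1 - A₀)]
  · ext q
    simp only [Set.mem_setOf_eq, Set.mem_insert_iff, Set.mem_singleton_iff, Prod.ext_iff]
    constructor
    · intro hq
      have hUq : sixHump q.1 q.2 ≤ -1.0316284 := le_trans (hq (A₀, -B₀)) val_a0b0
      rcases region q.1 q.2 hUq with h | h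
      · left
        have := min_in_posregion hp hr q hq h
        rw [this]
        exact ⟨rfl, by ring⟩
      · right
        have hq' : ∀ r : ℝ × ℝ, sixHump (-q.1) (-q.2) ≤ sixHump r.1 r.2 := by
          intro r; simpa [sixHump_neg] using hq r
        have := min_in_posregion hp hr (-q.1, -q.2) hq'
          ⟨by simp; linarith [h.2.1], by simp; linarith [h.1],
           by simp; linarith [h.2.2.2], by simp; linarith [h.2.2.1]⟩
        have e1 : -q.1 = p.1 := congrArg Prod.fst this
        have e2 : -q.2 = p.2 := congrArg Prod.snd this
        constructor <;> linarith
    · rintro (⟨h1, h2⟩ | ⟨h1, h2⟩) <;> intro r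
      · have : q = p := by ext <;> simp [h1, h2]
        rw [this]; exact hp r
      · have e : sixHump q.1 q.2 = sixHump p.1 p.2 := by
          rw [show q.1 = -p.1 by simp [h1], show q.2 = -p.2 by simp [h2], sixHump_neg]
        rw [e]; exact hp r
  · intro r hr' q
    rw [sixHump_neg]
    exact hr' q
end

section
/- Let g0, h0 be polynomials with h0(x) > 0 for all x in a compact set K ⊆ R^n, and K nonempty. Then min_{x∈K} g0(x)/h0(x) equals the infimum of ∫_K g0 dμ over all finite Borel measures μ supported on K satisfying ∫_K h0 dμ = 1. -/
open MeasureTheory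

theorem rational_min_eq_inf_over_measures
    (n : ℕ) (K : Set (Fin n → ℝ)) (hK : IsCompact K) (hKne : K.Nonempty)
    (g0 h0 : (Fin n → ℝ) → ℝ) (hg0 : Continuous g0) (hh0 : Continuous h0)
    (hpos : ∀ x ∈ K, 0 < h0 x) :
    sInf ((fun x => g0 x / h0 x) '' K) =
      sInf {r : ℝ | ∃ μ : Measure (Fin n → ℝ), IsFiniteMeasure μ ∧
        μ Kᶜ = 0 ∧ (∫ x, h0 x ∂μ) = 1 ∧ r = ∫ x, g0 x ∂μ} := by
  have hcont : ContinuousOn (fun x => g0 x / h0 x) K :=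
    hg0.continuousOn.div hh0.continuousOn (fun x hx => (hpos x hx).ne')
  obtain ⟨x₀, hx₀K, hx₀min⟩ := hK.exists_isMinOn hKne hcont
  set m := g0 x₀ / h0 x₀ with hm
  have hLHS : sInf ((fun x => g0 x / h0 x) '' K) = m :=
    IsLeast.csInf_eq ⟨⟨x₀, hx₀K, rfl⟩, by
      rintro y ⟨x, hx, rfl⟩; exact hx₀min hx⟩
  rw [hLHS]
  symm
  apply IsLeast.csInf_eq
  constructor
  · -- membership: scaled dirac at x₀
    refine ⟨ENNReal.ofReal (h0 x₀)⁻¹ • Measure.dirac x₀, ?_, ?_, ?_, ?_⟩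
    · constructor
      simp only [Measure.smul_apply, smul_eq_mul, Measure.dirac_apply' _ MeasurableSet.univ]
      simp [ENNReal.ofReal_lt_top, ENNReal.mul_lt_top]
    · rw [Measure.smul_apply, Measure.dirac_apply' _ hK.isClosed.measurableSet.compl]
      simp [hx₀K]
    · rw [integral_smul_measure, integral_dirac]
      simp [ENNReal.toReal_ofReal (inv_nonneg.mpr (hpos x₀ hx₀K).le),
        inv_mul_cancel₀ (hpos x₀ hx₀K).ne']
    · rw [integral_smul_measure, integral_dirac]
      simp [ENNReal.toReal_ofReal (inv_nonneg.mpr (hpos x₀ hx₀K).le), hm, div_eq_inv_mul]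
  · rintro r ⟨μ, hfin, hμK, hμh, rfl⟩
    have haeK : ∀ᵐ x ∂μ, x ∈ K := by
      rw [MeasureTheory.ae_iff]
      exact hμK
    obtain ⟨Cg, hCg⟩ := hK.exists_bound_of_continuousOn hg0.continuousOn
    obtain ⟨Ch, hCh⟩ := hK.exists_bound_of_continuousOn hh0.continuousOn
    have hig : Integrable g0 μ :=
      ⟨hg0.aestronglyMeasurable, HasFiniteIntegral.of_bounded
        (haeK.mono fun x hx => hCg x hx)⟩
    have hih : Integrable h0 μ :=
      ⟨hh0.aestronglyMeasurable, HasFiniteIntegral.of_bounded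
        (haeK.mono fun x hx => hCh x hx)⟩
    have hmono : ∀ᵐ x ∂μ, m * h0 x ≤ g0 x := by
      refine haeK.mono fun x hx => ?_
      have h1 : m ≤ g0 x / h0 x := hx₀min hx
      rwa [le_div_iff₀ (hpos x hx)] at h1
    calc m = ∫ x, m * h0 x ∂μ := by rw [integral_const_mul, hμh, mul_one]
    _ ≤ ∫ x, g0 x ∂μ := integral_mono_ae (hih.const_mul m) hig hmono
end

section
/- For the double integrator x1' = x2, x2' = u with |u| ≤ 1 and state constraint x2 ≥ -1, starting from (1,1), the minimum time to reach the origin equals 3.5, i.e., 1 + x1(0) + x2(0) + x2(0)^2/2 evaluated at (1,1). -/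
set_option maxHeartbeats 1000000

/-- Admissible trajectory of the double integrator with state constraint
`x2 ≥ -1`, steering `(a,b)` to the origin in time `T`. -/
def DIreachesC (a b T : ℝ) : Prop :=
  ∃ x1 x2 u : ℝ → ℝ, Measurable u ∧ (∀ t, u t ∈ Set.Icc (-1 : ℝ) 1) ∧
    (∀ t ∈ Set.Icc (0 : ℝ) T, HasDerivAt x1 (x2 t) t ∧ HasDerivAt x2 (u t) t) ∧
    (∀ t ∈ Set.Icc (0 : ℝ) T, -1 ≤ x2 t) ∧
    x1 0 = a ∧ x2 0 = b ∧ x1 T = 0 ∧ x2 T = 0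

open Set

noncomputable def Uc (h t : ℝ) : ℝ :=
  if t < 2 - h then -1 else if t < 2 + h then -1 + (t - (2-h))/(2*h)
  else if t < 5/2 - h + h^2/3 then 0
  else if t < 5/2 + h + h^2/3 then (t - (5/2 - h + h^2/3))/(2*h) else 1

noncomputable def X2c (h t : ℝ) : ℝ :=
  if t < 2 - h then 1 - t else if t < 2 + h then 1 - t + (t - (2-h))^2/(4*h)
  else if t < 5/2 - h + h^2/3 then -1
  else if t < 5/2 + h + h^2/3 then -1 + (t - (5/2 - h + h^2/3))^2/(4*h)
  else t - (7/2 + h^2/3)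

noncomputable def X1c (h t : ℝ) : ℝ :=
  if t < 2 - h then 1 + t - t^2/2 else if t < 2 + h then 1 + t - t^2/2 + (t - (2-h))^3/(12*h)
  else if t < 5/2 - h + h^2/3 then 1 - h + h^2/6 - (t - (2+h))
  else if t < 5/2 + h + h^2/3 then
    1/2 + h - h^2/6 - (t - (5/2 - h + h^2/3)) + (t - (5/2 - h + h^2/3))^3/(12*h)
  else (t - (7/2 + h^2/3))^2/2

lemma locDeriv {F f : ℝ → ℝ} {d t : ℝ} (b c : ℝ) (hb : b < t) (hc : t < c)
    (hf : HasDerivAt f d t) (hF : ∀ x, b < x → x < c → F x = f x) : HasDerivAt F d t := by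
  apply hf.congr_of_eventuallyEq
  filter_upwards [Ioo_mem_nhds hb hc] with x hx
  exact hF x hx.1 hx.2

lemma glueDeriv {F f g : ℝ → ℝ} {d a : ℝ} (b c : ℝ) (hb : b < a) (hc : a < c)
    (hf : HasDerivAt f d a) (hg : HasDerivAt g d a)
    (h1 : ∀ x, b < x → x < a → F x = f x) (h2 : ∀ x, a ≤ x → x < c → F x = g x)
    (hval : g a = f a) : HasDerivAt F d a := by
  have hFa : F a = g a := h2 a le_rfl hc
  have H1 : HasDerivWithinAt F d (Set.Ioo b a) a :=
    (hf.hasDerivWithinAt).congr (fun x hx => h1 x hx.1 hx.2) (hFa.trans hval)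
  have H2 : HasDerivWithinAt F d (Set.Ico a c) a :=
    (hg.hasDerivWithinAt).congr (fun x hx => h2 x hx.1 hx.2) hFa
  have H := H1.union H2
  rw [Set.Ioo_union_Ico_eq_Ioo hb (le_of_lt hc)] at H
  exact H.hasDerivAt (Ioo_mem_nhds hb hc)

lemma x2deriv (h : ℝ) (h0 : 0 < h) (h4 : h ≤ 1/4) (t : ℝ) :
    HasDerivAt (X2c h) (Uc h t) t := by
  have hne : h ≠ 0 := ne_of_gt h0
  have hsq : (0:ℝ) ≤ h^2 := sq_nonneg h
  have o12 : (2:ℝ) - h < 2 + h := by linarith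
  have o23 : (2:ℝ) + h < 5/2 - h + h^2/3 := by nlinarith
  have o34 : (5:ℝ)/2 - h + h^2/3 < 5/2 + h + h^2/3 := by linarith
  -- piece derivative builders
  have P1d : ∀ s : ℝ, HasDerivAt (fun x : ℝ => 1 - x) (-1) s :=
    fun s => (hasDerivAt_id s).const_sub 1
  have A1 : ∀ s : ℝ, HasDerivAt (fun x : ℝ => x - (2-h)) 1 s :=
    fun s => (hasDerivAt_id s).sub_const _
  have A2 : ∀ s : ℝ, HasDerivAt (fun x : ℝ => x - (5/2 - h + h^2/3)) 1 s :=
    fun s => (hasDerivAt_id s).sub_const _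
  have P2d : ∀ s : ℝ, HasDerivAt (fun x : ℝ => 1 - x + (x - (2-h))^2/(4*h))
      (-1 + (s - (2-h))/(2*h)) s := by
    intro s
    have := (P1d s).add (((A1 s).pow 2).div_const (4*h))
    refine this.congr_deriv ?_
    field_simp
    ring
  have P3d : ∀ s : ℝ, HasDerivAt (fun _ : ℝ => (-1:ℝ)) 0 s := fun s => hasDerivAt_const s _
  have P4d : ∀ s : ℝ, HasDerivAt (fun x : ℝ => -1 + (x - (5/2 - h + h^2/3))^2/(4*h))
      ((s - (5/2 - h + h^2/3))/(2*h)) s := by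
    intro s
    have := (hasDerivAt_const s (-1:ℝ)).add (((A2 s).pow 2).div_const (4*h))
    refine this.congr_deriv ?_
    field_simp
    ring
  have P5d : ∀ s : ℝ, HasDerivAt (fun x : ℝ => x - (7/2 + h^2/3)) 1 s :=
    fun s => (hasDerivAt_id s).sub_const _
  rcases lt_trichotomy t (2-h) with c1 | c1 | c1
  · have hU : Uc h t = -1 := by unfold Uc; rw [if_pos c1]
    rw [hU]
    exact locDeriv (t-1) (2-h) (by linarith) c1 (P1d t)
      (fun x _ hx => by unfold X2c; rw [if_pos hx])
  · subst c1
    have hU : Uc h (2-h) = -1 := by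
      unfold Uc; rw [if_neg (lt_irrefl _), if_pos o12]; ring
    rw [hU]
    refine glueDeriv (g := fun x : ℝ => 1 - x + (x - (2-h))^2/(4*h)) (0:ℝ) (2+h)
      (by linarith) o12 (P1d _) ?_ ?_ ?_ ?_
    · have := P2d (2-h); convert this using 1; field_simp; ring
    · intro x _ hx; unfold X2c; rw [if_pos hx]
    · intro x hx hx2; unfold X2c; rw [if_neg (not_lt.2 hx), if_pos hx2]
    · ring
  · rcases lt_trichotomy t (2+h) with c2 | c2 | c2
    · have hU : Uc h t = -1 + (t - (2-h))/(2*h) := by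
        unfold Uc; rw [if_neg (not_lt.2 (le_of_lt c1)), if_pos c2]
      rw [hU]
      exact locDeriv (2-h) (2+h) c1 c2 (P2d t)
        (fun x hx hx2 => by unfold X2c; rw [if_neg (not_lt.2 (le_of_lt hx)), if_pos hx2])
    · subst c2
      have hU : Uc h (2+h) = 0 := by
        unfold Uc
        rw [if_neg (not_lt.2 (le_of_lt o12)), if_neg (lt_irrefl _), if_pos o23]
      rw [hU]
      refine glueDeriv (f := fun x : ℝ => 1 - x + (x - (2-h))^2/(4*h)) (2-h) (5/2 - h + h^2/3)
        o12 o23 ?_ (P3d _) ?_ ?_ ?_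
      · have := P2d (2+h); convert this using 1; field_simp; ring
      · intro x hx hx2; unfold X2c; rw [if_neg (not_lt.2 (le_of_lt hx)), if_pos hx2]
      · intro x hx hx2
        unfold X2c
        rw [if_neg (by linarith), if_neg (not_lt.2 hx), if_pos hx2]
      · field_simp; ring
    · rcases lt_trichotomy t (5/2 - h + h^2/3) with c3 | c3 | c3
      · have hU : Uc h t = 0 := by
          unfold Uc; rw [if_neg (by linarith), if_neg (not_lt.2 (le_of_lt c2)), if_pos c3]
        rw [hU]
        exact locDeriv (2+h) (5/2 - h + h^2/3) c2 c3 (P3d t)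
          (fun x hx hx2 => by
            unfold X2c
            rw [if_neg (by linarith), if_neg (not_lt.2 (le_of_lt hx)), if_pos hx2])
      · subst c3
        have hU : Uc h (5/2 - h + h^2/3) = 0 := by
          unfold Uc
          rw [if_neg (by linarith), if_neg (by linarith), if_neg (lt_irrefl _), if_pos o34]
          ring
        rw [hU]
        refine glueDeriv (g := fun x : ℝ => -1 + (x - (5/2 - h + h^2/3))^2/(4*h))
          (2+h) (5/2 + h + h^2/3) o23 o34 (P3d _) ?_ ?_ ?_ ?_
        · have := P4d (5/2 - h + h^2/3); convert this using 1; field_simp; ring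
        · intro x hx hx2
          unfold X2c
          rw [if_neg (by linarith), if_neg (by linarith), if_pos hx2]
        · intro x hx hx2
          unfold X2c
          rw [if_neg (by linarith), if_neg (by linarith), if_neg (not_lt.2 hx), if_pos hx2]
        · ring
      · rcases lt_trichotomy t (5/2 + h + h^2/3) with c4 | c4 | c4
        · have hU : Uc h t = (t - (5/2 - h + h^2/3))/(2*h) := by
            unfold Uc
            rw [if_neg (by linarith), if_neg (by linarith), if_neg (not_lt.2 (le_of_lt c3)),
              if_pos c4]
          rw [hU]
          exact locDeriv (5/2 - h + h^2/3) (5/2 + h + h^2/3) c3 c4 (P4d t)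
            (fun x hx hx2 => by
              unfold X2c
              rw [if_neg (by linarith), if_neg (by linarith), if_neg (not_lt.2 (le_of_lt hx)),
                if_pos hx2])
        · subst c4
          have hU : Uc h (5/2 + h + h^2/3) = 1 := by
            unfold Uc
            rw [if_neg (by linarith), if_neg (by linarith), if_neg (by linarith),
              if_neg (lt_irrefl _)]
          rw [hU]
          refine glueDeriv (f := fun x : ℝ => -1 + (x - (5/2 - h + h^2/3))^2/(4*h))
            (5/2 - h + h^2/3) (5/2 + h + h^2/3 + 1) o34 (by linarith)
            ?_ (P5d _) ?_ ?_ ?_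
          · have := P4d (5/2 + h + h^2/3); convert this using 1; field_simp; ring
          · intro x hx hx2
            unfold X2c
            rw [if_neg (by linarith), if_neg (by linarith), if_neg (by linarith), if_pos hx2]
          · intro x hx _
            unfold X2c
            rw [if_neg (by linarith), if_neg (by linarith), if_neg (by linarith),
              if_neg (not_lt.2 hx)]
          · field_simp; ring
        · have hU : Uc h t = 1 := by
            unfold Uc
            rw [if_neg (by linarith), if_neg (by linarith), if_neg (by linarith),
              if_neg (not_lt.2 (le_of_lt c4))]
          rw [hU]
          exact locDeriv (5/2 + h + h^2/3) (t+1) c4 (by linarith) (P5d t)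
            (fun x hx _ => by
              unfold X2c
              rw [if_neg (by linarith), if_neg (by linarith), if_neg (by linarith),
                if_neg (not_lt.2 (le_of_lt hx))])

lemma x1deriv (h : ℝ) (h0 : 0 < h) (h4 : h ≤ 1/4) (t : ℝ) :
    HasDerivAt (X1c h) (X2c h t) t := by
  have hne : h ≠ 0 := ne_of_gt h0
  have hsq : (0:ℝ) ≤ h^2 := sq_nonneg h
  have o12 : (2:ℝ) - h < 2 + h := by linarith
  have o23 : (2:ℝ) + h < 5/2 - h + h^2/3 := by nlinarith
  have o34 : (5:ℝ)/2 - h + h^2/3 < 5/2 + h + h^2/3 := by linarith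
  have A1 : ∀ s : ℝ, HasDerivAt (fun x : ℝ => x - (2-h)) 1 s :=
    fun s => (hasDerivAt_id s).sub_const _
  have A2 : ∀ s : ℝ, HasDerivAt (fun x : ℝ => x - (5/2 - h + h^2/3)) 1 s :=
    fun s => (hasDerivAt_id s).sub_const _
  have Q1d : ∀ s : ℝ, HasDerivAt (fun x : ℝ => 1 + x - x^2/2) (1 - s) s := by
    intro s
    have := ((hasDerivAt_id s).const_add 1).sub ((hasDerivAt_pow 2 s).div_const 2)
    refine this.congr_deriv ?_
    push_cast; ring
  have Q2d : ∀ s : ℝ, HasDerivAt (fun x : ℝ => 1 + x - x^2/2 + (x - (2-h))^3/(12*h))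
      (1 - s + (s - (2-h))^2/(4*h)) s := by
    intro s
    have := (((hasDerivAt_id s).const_add 1).sub ((hasDerivAt_pow 2 s).div_const 2)).add
      (((A1 s).pow 3).div_const (12*h))
    refine this.congr_deriv ?_
    push_cast; field_simp; ring
  have Q3d : ∀ s : ℝ, HasDerivAt (fun x : ℝ => 1 - h + h^2/6 - (x - (2+h))) (-1) s :=
    fun s => ((hasDerivAt_id s).sub_const _).const_sub _
  have Q4d : ∀ s : ℝ, HasDerivAt (fun x : ℝ =>
      1/2 + h - h^2/6 - (x - (5/2 - h + h^2/3)) + (x - (5/2 - h + h^2/3))^3/(12*h))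
      (-1 + (s - (5/2 - h + h^2/3))^2/(4*h)) s := by
    intro s
    have := (((hasDerivAt_id s).sub_const (5/2 - h + h^2/3)).const_sub (1/2 + h - h^2/6)).add
      (((A2 s).pow 3).div_const (12*h))
    refine this.congr_deriv ?_
    push_cast; field_simp; ring
  have Q5d : ∀ s : ℝ, HasDerivAt (fun x : ℝ => (x - (7/2 + h^2/3))^2/2)
      (s - (7/2 + h^2/3)) s := by
    intro s
    have := (((hasDerivAt_id s).sub_const (7/2 + h^2/3)).pow 2).div_const 2
    refine this.congr_deriv ?_
    push_cast; simp only [id_eq]; ring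
  rcases lt_trichotomy t (2-h) with c1 | c1 | c1
  · have hv : X2c h t = 1 - t := by unfold X2c; rw [if_pos c1]
    rw [hv]
    exact locDeriv (t-1) (2-h) (by linarith) c1 (Q1d t)
      (fun x _ hx => by unfold X1c; rw [if_pos hx])
  · subst c1
    have hv : X2c h (2-h) = h - 1 := by
      unfold X2c; rw [if_neg (lt_irrefl _), if_pos o12]; ring
    rw [hv]
    refine glueDeriv (f := fun x : ℝ => 1 + x - x^2/2)
      (g := fun x : ℝ => 1 + x - x^2/2 + (x - (2-h))^3/(12*h)) (0:ℝ) (2+h)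
      (by linarith) o12 ?_ ?_ ?_ ?_ ?_
    · have := Q1d (2-h); convert this using 1; ring
    · have := Q2d (2-h); convert this using 1; field_simp; ring
    · intro x _ hx; unfold X1c; rw [if_pos hx]
    · intro x hx hx2; unfold X1c; rw [if_neg (not_lt.2 hx), if_pos hx2]
    · ring
  · rcases lt_trichotomy t (2+h) with c2 | c2 | c2
    · have hv : X2c h t = 1 - t + (t - (2-h))^2/(4*h) := by
        unfold X2c; rw [if_neg (not_lt.2 (le_of_lt c1)), if_pos c2]
      rw [hv]
      exact locDeriv (2-h) (2+h) c1 c2 (Q2d t)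
        (fun x hx hx2 => by unfold X1c; rw [if_neg (not_lt.2 (le_of_lt hx)), if_pos hx2])
    · subst c2
      have hv : X2c h (2+h) = -1 := by
        unfold X2c
        rw [if_neg (not_lt.2 (le_of_lt o12)), if_neg (lt_irrefl _), if_pos o23]
      rw [hv]
      refine glueDeriv (f := fun x : ℝ => 1 + x - x^2/2 + (x - (2-h))^3/(12*h))
        (2-h) (5/2 - h + h^2/3) o12 o23 ?_ (Q3d _) ?_ ?_ ?_
      · have := Q2d (2+h); convert this using 1; field_simp; ring
      · intro x hx hx2; unfold X1c; rw [if_neg (not_lt.2 (le_of_lt hx)), if_pos hx2]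
      · intro x hx hx2
        unfold X1c
        rw [if_neg (by linarith), if_neg (not_lt.2 hx), if_pos hx2]
      · field_simp; ring
    · rcases lt_trichotomy t (5/2 - h + h^2/3) with c3 | c3 | c3
      · have hv : X2c h t = -1 := by
          unfold X2c; rw [if_neg (by linarith), if_neg (not_lt.2 (le_of_lt c2)), if_pos c3]
        rw [hv]
        exact locDeriv (2+h) (5/2 - h + h^2/3) c2 c3 (Q3d t)
          (fun x hx hx2 => by
            unfold X1c
            rw [if_neg (by linarith), if_neg (not_lt.2 (le_of_lt hx)), if_pos hx2])
      · subst c3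
        have hv : X2c h (5/2 - h + h^2/3) = -1 := by
          unfold X2c
          rw [if_neg (by linarith), if_neg (by linarith), if_neg (lt_irrefl _), if_pos o34]
          ring
        rw [hv]
        refine glueDeriv (g := fun x : ℝ =>
            1/2 + h - h^2/6 - (x - (5/2 - h + h^2/3)) + (x - (5/2 - h + h^2/3))^3/(12*h))
          (2+h) (5/2 + h + h^2/3) o23 o34 (Q3d _) ?_ ?_ ?_ ?_
        · have := Q4d (5/2 - h + h^2/3); convert this using 1; ring
        · intro x hx hx2
          unfold X1c
          rw [if_neg (by linarith), if_neg (by linarith), if_pos hx2]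
        · intro x hx hx2
          unfold X1c
          rw [if_neg (by linarith), if_neg (by linarith), if_neg (not_lt.2 hx), if_pos hx2]
        · ring
      · rcases lt_trichotomy t (5/2 + h + h^2/3) with c4 | c4 | c4
        · have hv : X2c h t = -1 + (t - (5/2 - h + h^2/3))^2/(4*h) := by
            unfold X2c
            rw [if_neg (by linarith), if_neg (by linarith), if_neg (not_lt.2 (le_of_lt c3)),
              if_pos c4]
          rw [hv]
          exact locDeriv (5/2 - h + h^2/3) (5/2 + h + h^2/3) c3 c4 (Q4d t)
            (fun x hx hx2 => by
              unfold X1c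
              rw [if_neg (by linarith), if_neg (by linarith), if_neg (not_lt.2 (le_of_lt hx)),
                if_pos hx2])
        · subst c4
          have hv : X2c h (5/2 + h + h^2/3) = h - 1 := by
            unfold X2c
            rw [if_neg (by linarith), if_neg (by linarith), if_neg (by linarith),
              if_neg (lt_irrefl _)]
            ring
          rw [hv]
          refine glueDeriv (f := fun x : ℝ =>
              1/2 + h - h^2/6 - (x - (5/2 - h + h^2/3)) + (x - (5/2 - h + h^2/3))^3/(12*h))
            (g := fun x : ℝ => (x - (7/2 + h^2/3))^2/2)
            (5/2 - h + h^2/3) (5/2 + h + h^2/3 + 1) o34 (by linarith) ?_ ?_ ?_ ?_ ?_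
          · have := Q4d (5/2 + h + h^2/3); convert this using 1; field_simp; ring
          · have := Q5d (5/2 + h + h^2/3); convert this using 1; ring
          · intro x hx hx2
            unfold X1c
            rw [if_neg (by linarith), if_neg (by linarith), if_neg (by linarith), if_pos hx2]
          · intro x hx _
            unfold X1c
            rw [if_neg (by linarith), if_neg (by linarith), if_neg (by linarith),
              if_neg (not_lt.2 hx)]
          · field_simp; ring
        · have hv : X2c h t = t - (7/2 + h^2/3) := by
            unfold X2c
            rw [if_neg (by linarith), if_neg (by linarith), if_neg (by linarith),
              if_neg (not_lt.2 (le_of_lt c4))]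
          rw [hv]
          exact locDeriv (5/2 + h + h^2/3) (t+1) c4 (by linarith) (Q5d t)
            (fun x hx _ => by
              unfold X1c
              rw [if_neg (by linarith), if_neg (by linarith), if_neg (by linarith),
                if_neg (not_lt.2 (le_of_lt hx))])



lemma Ucm (h : ℝ) : Measurable (Uc h) := by
  unfold Uc
  refine Measurable.ite (measurableSet_lt measurable_id measurable_const) measurable_const ?_
  refine Measurable.ite (measurableSet_lt measurable_id measurable_const) ?_ ?_
  · exact measurable_const.add ((measurable_id.sub measurable_const).div_const _)
  refine Measurable.ite (measurableSet_lt measurable_id measurable_const) measurable_const ?_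
  refine Measurable.ite (measurableSet_lt measurable_id measurable_const) ?_ measurable_const
  exact (measurable_id.sub measurable_const).div_const _

lemma traj (h : ℝ) (h0 : 0 < h) (h4 : h ≤ 1/4) : DIreachesC 1 1 (7/2 + h^2/3) := by
  have hne : h ≠ 0 := ne_of_gt h0
  have hsq : (0:ℝ) ≤ h^2 := sq_nonneg h
  refine ⟨X1c h, X2c h, Uc h, Ucm h, ?_, fun t _ => ⟨x1deriv h h0 h4 t, x2deriv h h0 h4 t⟩,
    ?_, ?_, ?_, ?_, ?_⟩
  · intro t
    simp only [Set.mem_Icc]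
    unfold Uc
    split_ifs with e1 e2 e3 e4
    · norm_num
    · push_neg at e1
      have hd1 : 0 ≤ (t - (2-h))/(2*h) := div_nonneg (by linarith) (by linarith)
      have hd2 : (t - (2-h))/(2*h) ≤ 2 := by rw [div_le_iff₀ (by linarith)]; linarith
      constructor <;> linarith
    · norm_num
    · push_neg at e3
      have hd1 : 0 ≤ (t - (5/2 - h + h^2/3))/(2*h) := div_nonneg (by linarith) (by linarith)
      have hd2 : (t - (5/2 - h + h^2/3))/(2*h) ≤ 1 := by rw [div_le_one (by linarith)]; linarith
      constructor <;> linarith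
    · norm_num
  · intro t ht
    unfold X2c
    split_ifs with e1 e2 e3 e4
    · linarith
    · push_neg at e1
      have key : 1 - t + (t - (2-h))^2/(4*h) = -1 + (t-(2+h))^2/(4*h) := by
        field_simp; ring
      rw [key]
      have := div_nonneg (sq_nonneg (t-(2+h))) (by linarith : (0:ℝ) ≤ 4*h)
      linarith
    · exact le_rfl
    · have := div_nonneg (sq_nonneg (t - (5/2 - h + h^2/3))) (by linarith : (0:ℝ) ≤ 4*h)
      linarith
    · push_neg at e4
      linarith
  · unfold X1c; rw [if_pos (by linarith : (0:ℝ) < 2 - h)]; norm_num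
  · unfold X2c; rw [if_pos (by linarith : (0:ℝ) < 2 - h)]; norm_num
  · unfold X1c
    rw [if_neg (by push_neg; nlinarith), if_neg (by push_neg; nlinarith),
      if_neg (by push_neg; nlinarith), if_neg (by push_neg; nlinarith)]
    ring
  · unfold X2c
    rw [if_neg (by push_neg; nlinarith), if_neg (by push_neg; nlinarith),
      if_neg (by push_neg; nlinarith), if_neg (by push_neg; nlinarith)]
    ring

lemma integ_lin (a b c d : ℝ) : ∫ t in a..b, (c + d * t) = c*(b-a) + d*(b^2 - a^2)/2 := by
  have H : ∀ t ∈ Set.uIcc a b, HasDerivAt (fun x => c*x + d*x^2/2) (c + d*t) t := by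
    intro t _
    have h1 := ((hasDerivAt_pow 2 t).const_mul d).div_const 2
    have h2 := ((hasDerivAt_id t).const_mul c).add h1
    refine h2.congr_deriv ?_
    push_cast
    ring
  rw [intervalIntegral.integral_eq_sub_of_hasDerivAt H
    ((continuous_const.add (continuous_const.mul continuous_id)).intervalIntegrable a b)]
  ring

lemma lb {T : ℝ} (hT : 0 ≤ T) (hR : DIreachesC 1 1 T) : 7/2 ≤ T := by
  obtain ⟨x1, x2, u, hm, hu, hd, hc, h10, h20, h1T, h2T⟩ := hR
  have hdw : ∀ s ∈ Icc (0:ℝ) T, HasDerivWithinAt x2 (u s) (Icc (0:ℝ) T) s :=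
    fun s hs => (hd s hs).2.hasDerivWithinAt
  have hub : ∀ s ∈ Icc (0:ℝ) T, ‖u s‖ ≤ 1 := by
    intro s _
    rw [Real.norm_eq_abs, abs_le]
    exact ⟨(hu s).1, (hu s).2⟩
  have lip : ∀ s ∈ Icc (0:ℝ) T, ∀ t ∈ Icc (0:ℝ) T, ‖x2 t - x2 s‖ ≤ 1 * ‖t - s‖ :=
    fun s hs t ht => (convex_Icc _ _).norm_image_sub_le_of_norm_hasDerivWithin_le hdw hub hs ht
  have hT1 : 1 ≤ T := by
    have e := lip 0 ⟨le_refl 0, hT⟩ T ⟨hT, le_refl T⟩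
    rw [h2T, h20, Real.norm_eq_abs, Real.norm_eq_abs, sub_zero, abs_of_nonneg hT] at e
    have : |(0:ℝ) - 1| = 1 := by norm_num
    rw [this] at e
    linarith
  have b1 : ∀ t ∈ Icc (0:ℝ) T, 1 - t ≤ x2 t := by
    intro t ht
    have e := lip 0 ⟨le_refl 0, hT⟩ t ht
    rw [h20, Real.norm_eq_abs, Real.norm_eq_abs, sub_zero, abs_of_nonneg ht.1] at e
    have := (abs_le.1 e).1
    linarith
  have b2 : ∀ t ∈ Icc (0:ℝ) T, t - T ≤ x2 t := by
    intro t ht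
    have e := lip T ⟨hT, le_refl T⟩ t ht
    rw [h2T, sub_zero, Real.norm_eq_abs, Real.norm_eq_abs,
      abs_of_nonpos (by linarith [ht.2] : t - T ≤ 0)] at e
    have := (abs_le.1 e).1
    linarith
  have hcont : ContinuousOn x2 (Icc 0 T) :=
    fun s hs => ((hd s hs).2.continuousAt).continuousWithinAt
  have hInt : IntervalIntegrable x2 MeasureTheory.volume 0 T := by
    apply ContinuousOn.intervalIntegrable
    rwa [uIcc_of_le hT]
  have hFTC : ∫ s in (0:ℝ)..T, x2 s = x1 T - x1 0 := by
    apply intervalIntegral.integral_eq_sub_of_hasDerivAt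
    · intro s hs
      rw [uIcc_of_le hT] at hs
      exact (hd s hs).1
    · exact hInt
  rw [h1T, h10] at hFTC
  have subInt : ∀ a b : ℝ, 0 ≤ a → a ≤ b → b ≤ T →
      IntervalIntegrable x2 MeasureTheory.volume a b := by
    intro a b ha hab hbT
    apply hInt.mono_set
    rw [uIcc_of_le hab, uIcc_of_le hT]
    exact Icc_subset_Icc ha hbT
  have key : ∀ a b c d : ℝ, 0 ≤ a → a ≤ b → b ≤ T →
      (∀ t ∈ Icc a b, c + d * t ≤ x2 t) →
      c*(b-a) + d*(b^2-a^2)/2 ≤ ∫ s in a..b, x2 s := by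
    intro a b c d ha hab hbT hle
    rw [← integ_lin a b c d]
    exact intervalIntegral.integral_mono_on hab
      ((continuous_const.add (continuous_const.mul continuous_id)).intervalIntegrable a b)
      (subInt a b ha hab hbT) hle
  -- stage 1 : 3 ≤ T
  have hm0 : (0:ℝ) ≤ (T+1)/2 := by linarith
  have hmT : (T+1)/2 ≤ T := by linarith
  have split1 : (∫ s in (0:ℝ)..((T+1)/2), x2 s) + ∫ s in ((T+1)/2)..T, x2 s
      = ∫ s in (0:ℝ)..T, x2 s :=
    intervalIntegral.integral_add_adjacent_intervals (subInt _ _ le_rfl hm0 hmT)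
      (subInt _ _ hm0 hmT le_rfl)
  have i1 := key 0 ((T+1)/2) 1 (-1) le_rfl hm0 hmT (fun t ht => by
    have := b1 t ⟨ht.1, le_trans ht.2 hmT⟩; linarith)
  have i2 := key ((T+1)/2) T (-T) 1 hm0 hmT le_rfl (fun t ht => by
    have := b2 t ⟨le_trans hm0 ht.1, ht.2⟩; linarith)
  have hT3 : 3 ≤ T := by
    by_contra hcon
    push_neg at hcon
    nlinarith [hFTC, split1, i1, i2]
  -- stage 2 : 7/2 ≤ T
  have h02 : (0:ℝ) ≤ 2 := by norm_num
  have h2T1 : (2:ℝ) ≤ T - 1 := by linarith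
  have hT1T : T - 1 ≤ T := by linarith
  have splitA : (∫ s in (0:ℝ)..2, x2 s) + ∫ s in (2:ℝ)..(T-1), x2 s
      = ∫ s in (0:ℝ)..(T-1), x2 s :=
    intervalIntegral.integral_add_adjacent_intervals (subInt _ _ le_rfl h02 (by linarith))
      (subInt _ _ h02 h2T1 hT1T)
  have splitB : (∫ s in (0:ℝ)..(T-1), x2 s) + ∫ s in (T-1)..T, x2 s
      = ∫ s in (0:ℝ)..T, x2 s :=
    intervalIntegral.integral_add_adjacent_intervals (subInt _ _ le_rfl (by linarith) hT1T)
      (subInt _ _ (by linarith) hT1T le_rfl)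
  have j1 := key 0 2 1 (-1) le_rfl h02 (by linarith) (fun t ht => by
    have := b1 t ⟨ht.1, by linarith [ht.2]⟩; linarith)
  have j2 := key 2 (T-1) (-1) 0 h02 h2T1 hT1T (fun t ht => by
    have := hc t ⟨by linarith [ht.1], by linarith [ht.2]⟩; linarith)
  have j3 := key (T-1) T (-T) 1 (by linarith) hT1T le_rfl (fun t ht => by
    have := b2 t ⟨by linarith [ht.1], ht.2⟩; linarith)
  nlinarith [hFTC, splitA, splitB, j1, j2, j3]

theorem double_integrator_constrained_minimum_time :
    sInf {T : ℝ | 0 ≤ T ∧ DIreachesC 1 1 T} = 3.5 ∧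
    (3.5 : ℝ) = 1 + 1 + 1 + 1^2/2 := by
  constructor
  · have hlow : ∀ T ∈ {T : ℝ | 0 ≤ T ∧ DIreachesC 1 1 T}, (3.5:ℝ) ≤ T := by
      intro T hT
      have := lb hT.1 hT.2
      norm_num
      linarith
    have hbdd : BddBelow {T : ℝ | 0 ≤ T ∧ DIreachesC 1 1 T} := ⟨3.5, hlow⟩
    have hne : {T : ℝ | 0 ≤ T ∧ DIreachesC 1 1 T}.Nonempty := by
      refine ⟨7/2 + (1/4:ℝ)^2/3, ⟨by norm_num, traj (1/4) (by norm_num) le_rfl⟩⟩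
    apply le_antisymm
    · apply le_of_forall_pos_le_add
      intro ε hε
      set h' := min (1/4:ℝ) ε with hh'
      have h'0 : 0 < h' := lt_min (by norm_num) hε
      have h'4 : h' ≤ 1/4 := min_le_left _ _
      have h'ε : h' ≤ ε := min_le_right _ _
      have mem : (7/2 + h'^2/3) ∈ {T : ℝ | 0 ≤ T ∧ DIreachesC 1 1 T} :=
        ⟨by positivity, traj h' h'0 h'4⟩
      have hb : h'^2/3 ≤ ε := by nlinarith
      have := csInf_le hbdd mem
      norm_num at this ⊢
      linarith
    · exact le_csInf hne hlow
  · norm_num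
end
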